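/- Let Φ*(η₁,η₂) = η₁ log η₁ + η₂ log η₂ − (1 + η₁ + η₂) log(1 + η₁ + η₂) on Ω* = (0,∞)². Then at every point of Ω* the matrix R_{ij} = −∂²(log det Hess Φ*)/∂η_i∂η_j equals −[[1/η₁² + 1/S², 1/S²],[1/S², 1/η₂² + 1/S²]] with S = 1 + η₁ + η₂, and in particular R is negative definite. (This is the statement that the Kähler manifold 𝕎_NegTri has negative Ricci curvature.) -/

import Mathlib

open Real Matrix

/-- Partial derivative of `f : ℝⁿ → ℝ` in the `i`-th coordinate direction. -/
noncomputable def pd {n : ℕ} (i : Fin n) (f : (Fin n → ℝ) → ℝ) : (Fin n → ℝ) → ℝ :=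
  fun x => fderiv ℝ f x (Pi.single i 1)

/-- Hessian matrix of second partial derivatives of `f : ℝⁿ → ℝ`. -/
noncomputable def hessian {n : ℕ} (f : (Fin n → ℝ) → ℝ) (x : Fin n → ℝ) :
    Matrix (Fin n) (Fin n) ℝ :=
  Matrix.of fun i j => pd i (pd j f) x

/-- The Legendre dual of the negative trinomial log-partition function. -/
noncomputable def ΦNegTriStar (η : Fin 2 → ℝ) : ℝ :=
  η 0 * Real.log (η 0) + η 1 * Real.log (η 1) -
    (1 + η 0 + η 1) * Real.log (1 + η 0 + η 1)

/-- The Ricci matrix `R_{ij} = -∂²(log det Hess Φ*)/∂η_i∂η_j` of `𝕎_NegTri`. -/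
noncomputable def ricciNegTri (η : Fin 2 → ℝ) : Matrix (Fin 2) (Fin 2) ℝ :=
  -(hessian (fun y => Real.log ((hessian ΦNegTriStar y).det)) η)

namespace NegTriAux

noncomputable def LL (i : Fin 2) : (Fin 2 → ℝ) →L[ℝ] ℝ := ContinuousLinearMap.proj i

lemma LL_single (i j : Fin 2) : LL i (Pi.single j 1) = if i = j then 1 else 0 := by
  simp [LL, Pi.single_apply]

lemma hasF_coord (i : Fin 2) (y : Fin 2 → ℝ) :
    HasFDerivAt (fun y : Fin 2 → ℝ => y i) (LL i) y := (LL i).hasFDerivAt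

lemma hasF_S (y : Fin 2 → ℝ) :
    HasFDerivAt (fun y : Fin 2 → ℝ => 1 + y 0 + y 1) (LL 0 + LL 1) y := by
  have := ((hasFDerivAt_const (1:ℝ) y).add (hasF_coord 0 y)).add (hasF_coord 1 y)
  rw [zero_add] at this
  exact this

lemma hasF_mul_log {f : (Fin 2 → ℝ) → ℝ} {L' : (Fin 2 → ℝ) →L[ℝ] ℝ} {y : Fin 2 → ℝ}
    (hf : HasFDerivAt f L' y) (h : f y ≠ 0) :
    HasFDerivAt (fun y => f y * Real.log (f y)) ((Real.log (f y) + 1) • L') y := by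
  have hd : HasDerivAt (fun t : ℝ => t * Real.log t) (Real.log (f y) + 1) (f y) := by
    have := (hasDerivAt_id (f y)).mul (Real.hasDerivAt_log h)
    exact this.congr_deriv (by simp [mul_inv_cancel₀ h, add_comm])
  exact hd.comp_hasFDerivAt y hf

lemma hasF_log {f : (Fin 2 → ℝ) → ℝ} {L' : (Fin 2 → ℝ) →L[ℝ] ℝ} {y : Fin 2 → ℝ}
    (hf : HasFDerivAt f L' y) (h : f y ≠ 0) :
    HasFDerivAt (fun y => Real.log (f y)) ((f y)⁻¹ • L') y :=
  (Real.hasDerivAt_log h).comp_hasFDerivAt y hf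

lemma hasF_inv {f : (Fin 2 → ℝ) → ℝ} {L' : (Fin 2 → ℝ) →L[ℝ] ℝ} {y : Fin 2 → ℝ}
    (hf : HasFDerivAt f L' y) (h : f y ≠ 0) :
    HasFDerivAt (fun y => (f y)⁻¹) ((-(f y ^ 2)⁻¹) • L') y :=
  (hasDerivAt_inv h).comp_hasFDerivAt y hf

lemma hasF_Phi {y : Fin 2 → ℝ} (h0 : 0 < y 0) (h1 : 0 < y 1) :
    HasFDerivAt ΦNegTriStar
      ((Real.log (y 0) + 1) • LL 0 + (Real.log (y 1) + 1) • LL 1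
        - (Real.log (1 + y 0 + y 1) + 1) • (LL 0 + LL 1)) y := by
  have hS : (0:ℝ) < 1 + y 0 + y 1 := by linarith
  exact ((hasF_mul_log (hasF_coord 0 y) h0.ne').add
    (hasF_mul_log (hasF_coord 1 y) h1.ne')).sub (hasF_mul_log (hasF_S y) hS.ne')

lemma pd_Phi_0 {y : Fin 2 → ℝ} (h0 : 0 < y 0) (h1 : 0 < y 1) :
    pd 0 ΦNegTriStar y = Real.log (y 0) - Real.log (1 + y 0 + y 1) := by
  rw [pd, (hasF_Phi h0 h1).fderiv]
  simp [LL_single]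

lemma pd_Phi_1 {y : Fin 2 → ℝ} (h0 : 0 < y 0) (h1 : 0 < y 1) :
    pd 1 ΦNegTriStar y = Real.log (y 1) - Real.log (1 + y 0 + y 1) := by
  rw [pd, (hasF_Phi h0 h1).fderiv]
  simp [LL_single]

lemma mem_U {y : Fin 2 → ℝ} (h0 : 0 < y 0) (h1 : 0 < y 1) :
    ∀ᶠ z in nhds y, 0 < z 0 ∧ 0 < z 1 := by
  have o : IsOpen {z : Fin 2 → ℝ | 0 < z 0 ∧ 0 < z 1} :=
    (isOpen_lt continuous_const (continuous_apply 0)).inter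
      (isOpen_lt continuous_const (continuous_apply 1))
  exact o.mem_nhds ⟨h0, h1⟩

lemma hasF_g0 {y : Fin 2 → ℝ} (h0 : 0 < y 0) (h1 : 0 < y 1) :
    HasFDerivAt (fun z : Fin 2 → ℝ => Real.log (z 0) - Real.log (1 + z 0 + z 1))
      ((y 0)⁻¹ • LL 0 - (1 + y 0 + y 1)⁻¹ • (LL 0 + LL 1)) y := by
  have hS : (0:ℝ) < 1 + y 0 + y 1 := by linarith
  exact (hasF_log (hasF_coord 0 y) h0.ne').sub (hasF_log (hasF_S y) hS.ne')

lemma hasF_g1 {y : Fin 2 → ℝ} (h0 : 0 < y 0) (h1 : 0 < y 1) :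
    HasFDerivAt (fun z : Fin 2 → ℝ => Real.log (z 1) - Real.log (1 + z 0 + z 1))
      ((y 1)⁻¹ • LL 1 - (1 + y 0 + y 1)⁻¹ • (LL 0 + LL 1)) y := by
  have hS : (0:ℝ) < 1 + y 0 + y 1 := by linarith
  exact (hasF_log (hasF_coord 1 y) h1.ne').sub (hasF_log (hasF_S y) hS.ne')

lemma pd_pd_Phi_0 (i : Fin 2) {y : Fin 2 → ℝ} (h0 : 0 < y 0) (h1 : 0 < y 1) :
    pd i (pd 0 ΦNegTriStar) y
      = (if i = 0 then (y 0)⁻¹ else 0) - (1 + y 0 + y 1)⁻¹ := by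
  have hev : pd 0 ΦNegTriStar
      =ᶠ[nhds y] fun z => Real.log (z 0) - Real.log (1 + z 0 + z 1) :=
    (mem_U h0 h1).mono (fun z hz => pd_Phi_0 hz.1 hz.2)
  rw [pd, hev.fderiv_eq, (hasF_g0 h0 h1).fderiv]
  fin_cases i <;> simp [LL_single]

lemma pd_pd_Phi_1 (i : Fin 2) {y : Fin 2 → ℝ} (h0 : 0 < y 0) (h1 : 0 < y 1) :
    pd i (pd 1 ΦNegTriStar) y
      = (if i = 1 then (y 1)⁻¹ else 0) - (1 + y 0 + y 1)⁻¹ := by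
  have hev : pd 1 ΦNegTriStar
      =ᶠ[nhds y] fun z => Real.log (z 1) - Real.log (1 + z 0 + z 1) :=
    (mem_U h0 h1).mono (fun z hz => pd_Phi_1 hz.1 hz.2)
  rw [pd, hev.fderiv_eq, (hasF_g1 h0 h1).fderiv]
  fin_cases i <;> simp [LL_single]

lemma det_hess {y : Fin 2 → ℝ} (h0 : 0 < y 0) (h1 : 0 < y 1) :
    (hessian ΦNegTriStar y).det = (y 0 * y 1 * (1 + y 0 + y 1))⁻¹ := by
  have hS : (0:ℝ) < 1 + y 0 + y 1 := by linarith
  have e00 := pd_pd_Phi_0 0 h0 h1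
  have e10 := pd_pd_Phi_0 1 h0 h1
  have e01 := pd_pd_Phi_1 0 h0 h1
  have e11 := pd_pd_Phi_1 1 h0 h1
  rw [Matrix.det_fin_two]
  show pd 0 (pd 0 ΦNegTriStar) y * pd 1 (pd 1 ΦNegTriStar) y
      - pd 0 (pd 1 ΦNegTriStar) y * pd 1 (pd 0 ΦNegTriStar) y = _
  rw [e00, e10, e01, e11]
  rw [if_pos rfl, if_pos rfl, if_neg (by decide : (0 : Fin 2) ≠ 1),
    if_neg (by decide : (1 : Fin 2) ≠ 0)]
  field_simp
  ring

lemma log_det_hess {y : Fin 2 → ℝ} (h0 : 0 < y 0) (h1 : 0 < y 1) :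
    Real.log ((hessian ΦNegTriStar y).det)
      = -(Real.log (y 0) + Real.log (y 1) + Real.log (1 + y 0 + y 1)) := by
  have hS : (0:ℝ) < 1 + y 0 + y 1 := by linarith
  rw [det_hess h0 h1, Real.log_inv,
    Real.log_mul (by positivity) hS.ne', Real.log_mul h0.ne' h1.ne']

lemma hasF_G {y : Fin 2 → ℝ} (h0 : 0 < y 0) (h1 : 0 < y 1) :
    HasFDerivAt
      (fun z : Fin 2 → ℝ =>
        -(Real.log (z 0) + Real.log (z 1) + Real.log (1 + z 0 + z 1)))
      (-((y 0)⁻¹ • LL 0 + (y 1)⁻¹ • LL 1 + (1 + y 0 + y 1)⁻¹ • (LL 0 + LL 1))) y := by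
  have hS : (0:ℝ) < 1 + y 0 + y 1 := by linarith
  exact (((hasF_log (hasF_coord 0 y) h0.ne').add (hasF_log (hasF_coord 1 y) h1.ne')).add
    (hasF_log (hasF_S y) hS.ne')).neg

lemma pd_F (j : Fin 2) {y : Fin 2 → ℝ} (h0 : 0 < y 0) (h1 : 0 < y 1) :
    pd j (fun z => Real.log ((hessian ΦNegTriStar z).det)) y
      = -(y j)⁻¹ - (1 + y 0 + y 1)⁻¹ := by
  have hev : (fun z => Real.log ((hessian ΦNegTriStar z).det))
      =ᶠ[nhds y] fun z =>
        -(Real.log (z 0) + Real.log (z 1) + Real.log (1 + z 0 + z 1)) :=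
    (mem_U h0 h1).mono (fun z hz => log_det_hess hz.1 hz.2)
  rw [pd, hev.fderiv_eq, (hasF_G h0 h1).fderiv]
  fin_cases j <;> simp [LL_single] <;> ring

lemma hasF_H (j : Fin 2) {y : Fin 2 → ℝ} (h0 : 0 < y 0) (h1 : 0 < y 1) :
    HasFDerivAt (fun z : Fin 2 → ℝ => -(z j)⁻¹ - (1 + z 0 + z 1)⁻¹)
      ((y j ^ 2)⁻¹ • LL j + ((1 + y 0 + y 1) ^ 2)⁻¹ • (LL 0 + LL 1)) y := by
  have hS : (0:ℝ) < 1 + y 0 + y 1 := by linarith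
  have hj : y j ≠ 0 := by fin_cases j <;> [exact h0.ne'; exact h1.ne']
  have := ((hasF_inv (hasF_coord j y) hj).neg).sub (hasF_inv (hasF_S y) hS.ne')
  exact this.congr_fderiv (by ext v; simp; ring)

lemma pd_pd_F (i j : Fin 2) {y : Fin 2 → ℝ} (h0 : 0 < y 0) (h1 : 0 < y 1) :
    pd i (pd j (fun z => Real.log ((hessian ΦNegTriStar z).det))) y
      = (if i = j then (y j ^ 2)⁻¹ else 0) + ((1 + y 0 + y 1) ^ 2)⁻¹ := by
  have hev : pd j (fun z => Real.log ((hessian ΦNegTriStar z).det))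
      =ᶠ[nhds y] fun z => -(z j)⁻¹ - (1 + z 0 + z 1)⁻¹ :=
    (mem_U h0 h1).mono (fun z hz => pd_F j hz.1 hz.2)
  rw [pd, hev.fderiv_eq, (hasF_H j h0 h1).fderiv]
  fin_cases i <;> fin_cases j <;> simp [LL_single]

end NegTriAux

open NegTriAux in
/-- `𝕎_NegTri` has negative Ricci curvature: the Ricci matrix equals the stated
matrix and is negative definite. -/
theorem negTri_negative_ricci (η : Fin 2 → ℝ) (h1 : 0 < η 0) (h2 : 0 < η 1) :
    ricciNegTri η =
      -(!![1 / (η 0) ^ 2 + 1 / (1 + η 0 + η 1) ^ 2, 1 / (1 + η 0 + η 1) ^ 2;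
          1 / (1 + η 0 + η 1) ^ 2, 1 / (η 1) ^ 2 + 1 / (1 + η 0 + η 1) ^ 2]) ∧
    (-(ricciNegTri η)).PosDef := by
  have hS : (0:ℝ) < 1 + η 0 + η 1 := by linarith
  have key : -(ricciNegTri η) =
      !![1 / (η 0) ^ 2 + 1 / (1 + η 0 + η 1) ^ 2, 1 / (1 + η 0 + η 1) ^ 2;
          1 / (1 + η 0 + η 1) ^ 2, 1 / (η 1) ^ 2 + 1 / (1 + η 0 + η 1) ^ 2] := by
    rw [ricciNegTri, neg_neg]
    ext i j
    have := pd_pd_F i j h1 h2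
    fin_cases i <;> fin_cases j <;>
      simp_all [hessian, one_div]
  refine ⟨by rw [← neg_neg (ricciNegTri η), key], ?_⟩
  rw [key]
  refine posDef_iff_dotProduct_mulVec.mpr ⟨?_, ?_⟩
  · ext i j
    fin_cases i <;> fin_cases j <;> simp [Matrix.conjTranspose_apply]
  · intro x hx
    have hx' : x 0 ≠ 0 ∨ x 1 ≠ 0 := by
      by_contra h
      push_neg at h
      exact hx (funext fun i => by fin_cases i <;> simp [h.1, h.2])
    have hA : (0:ℝ) < 1 / (η 0) ^ 2 := by positivity
    have hB : (0:ℝ) < 1 / (η 1) ^ 2 := by positivity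
    have hC : (0:ℝ) < 1 / (1 + η 0 + η 1) ^ 2 := by positivity
    have expand : (star x) ⬝ᵥ
        ((!![1 / (η 0) ^ 2 + 1 / (1 + η 0 + η 1) ^ 2, 1 / (1 + η 0 + η 1) ^ 2;
          1 / (1 + η 0 + η 1) ^ 2, 1 / (η 1) ^ 2 + 1 / (1 + η 0 + η 1) ^ 2]) *ᵥ x)
        = (1 / (η 0) ^ 2) * x 0 ^ 2 + (1 / (η 1) ^ 2) * x 1 ^ 2
          + (1 / (1 + η 0 + η 1) ^ 2) * (x 0 + x 1) ^ 2 := by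
      simp [Matrix.mulVec, dotProduct, Fin.sum_univ_two]
      ring
    rw [expand]
    rcases hx' with h | h
    · have : 0 < x 0 ^ 2 := lt_of_le_of_ne (sq_nonneg _) (Ne.symm (pow_ne_zero 2 h))
      nlinarith [sq_nonneg (x 1), sq_nonneg (x 0 + x 1)]
    · have : 0 < x 1 ^ 2 := lt_of_le_of_ne (sq_nonneg _) (Ne.symm (pow_ne_zero 2 h))
      nlinarith [sq_nonneg (x 0), sq_nonneg (x 0 + x 1)]
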